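/- Set A_n = M_n(1,2,3) and B_m = M_m(2,3,1). For every m ≥ n ≥ 4 with (n,m) ∉ {(4,4), (5,5), (6,6)}, the direct sum A_n ⊕ B_m is product-irregular: all n + m row products (of nonzero entries) are pairwise distinct. -/

import Mathlib

/-- The matrix `M_n(x,y,z)` (1-based indices translated to `Fin n`): zero diagonal,
`x` when `j ≤ n - i + 1` (and `i ≠ j`), `z` at positions `(k,n)` and `(n,k)` where
`k = ⌈n/2⌉ + 1`, and `y` otherwise. -/
def Mmat (n x y z : ℕ) : Matrix (Fin n) (Fin n) ℕ := fun i j =>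
  if i = j then 0
  else if (j : ℕ) + 1 ≤ n - (i : ℕ) then x
  else if (((i : ℕ) + 1 = (n + 1) / 2 + 1 ∧ (j : ℕ) + 1 = n) ∨
           ((i : ℕ) + 1 = n ∧ (j : ℕ) + 1 = (n + 1) / 2 + 1)) then z
  else y

/-- Product of the nonzero entries of row `i`. -/
def rowProd {ι : Type*} [Fintype ι] [DecidableEq ι] (M : Matrix ι ι ℕ) (i : ι) : ℕ :=
  ∏ j ∈ Finset.univ.filter (fun j => M i j ≠ 0), M i j

/-- A square matrix is product-irregular if distinct rows have distinct products of
nonzero entries. -/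
def MatPI {ι : Type*} [Fintype ι] [DecidableEq ι] (M : Matrix ι ι ℕ) : Prop :=
  Function.Injective (rowProd M)

section Aux

set_option linter.unreachableTactic false
set_option linter.unusedTactic false
set_option linter.unnecessarySeqFocus false

/-- entry of Mmat as a function of naturals -/
def ent (n x y z i j : ℕ) : ℕ :=
  if i = j then 1
  else if j + 1 ≤ n - i then x
  else if ((i + 1 = (n + 1) / 2 + 1 ∧ j + 1 = n) ∨
           (i + 1 = n ∧ j + 1 = (n + 1) / 2 + 1)) then z
  else y

def yexp (n i : ℕ) : ℕ :=
  if i < (n+1)/2 then i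
  else if i = (n+1)/2 then (n+1)/2 - 2
  else if i = n - 1 then n - 3
  else i - 1

def zexp (n i : ℕ) : ℕ := if i = (n+1)/2 ∨ i = n - 1 then 1 else 0

def xexp (n i : ℕ) : ℕ := if i < (n+1)/2 then n - 1 - i else n - i

-- counting lemma
lemma countI (c d a b : ℕ) : ∀ n : ℕ,
    (∑ j ∈ Finset.range n, if (c ≤ j ∧ j < d) ∧ j ≠ a ∧ j ≠ b then 1 else 0)
    = min d n - c - (if (c ≤ a ∧ a < d) ∧ a < n then 1 else 0)
      - (if (c ≤ b ∧ b < d) ∧ b < n ∧ b ≠ a then 1 else 0) := by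
  intro n
  induction n with
  | zero => simp
  | succ n ih => rw [Finset.sum_range_succ, ih]; split_ifs <;> omega



lemma rowProd_Mmat (n x y z : ℕ) (hx : x ≠ 0) (hy : y ≠ 0) (hz : z ≠ 0) (i : Fin n) :
    rowProd (Mmat n x y z) i = ∏ j ∈ Finset.range n, ent n x y z (i : ℕ) j := by
  rw [rowProd, Finset.prod_filter, ← Fin.prod_univ_eq_prod_range]
  refine Finset.prod_congr rfl fun j _ => ?_
  have h : (i = j) ↔ ((i:ℕ) = (j:ℕ)) := Fin.ext_iff
  simp only [Mmat, ent]
  split_ifs with h1 h2 h3 h4 h5 h6 h7 h8 <;> simp_all <;> omega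

-- A = M(1,2,3): product = 2^(y-count) * 3^(z-count)
lemma entA (n i j : ℕ) : ent n 1 2 3 i j =
    2 ^ (if i ≠ j ∧ ¬(j + 1 ≤ n - i) ∧
          ¬((i + 1 = (n + 1) / 2 + 1 ∧ j + 1 = n) ∨ (i + 1 = n ∧ j + 1 = (n + 1) / 2 + 1))
        then 1 else 0) *
    3 ^ (if i ≠ j ∧ ¬(j + 1 ≤ n - i) ∧
          ((i + 1 = (n + 1) / 2 + 1 ∧ j + 1 = n) ∨ (i + 1 = n ∧ j + 1 = (n + 1) / 2 + 1))
        then 1 else 0) := by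
  unfold ent; split_ifs <;> simp_all <;> omega

lemma entB (n i j : ℕ) : ent n 2 3 1 i j =
    2 ^ (if i ≠ j ∧ j + 1 ≤ n - i then 1 else 0) *
    3 ^ (if i ≠ j ∧ ¬(j + 1 ≤ n - i) ∧
          ¬((i + 1 = (n + 1) / 2 + 1 ∧ j + 1 = n) ∨ (i + 1 = n ∧ j + 1 = (n + 1) / 2 + 1))
        then 1 else 0) := by
  unfold ent; split_ifs <;> simp_all <;> omega

-- sum of the y-count indicator
lemma sumY (n i : ℕ) (hn : 4 ≤ n) (hi : i < n) :
    (∑ j ∈ Finset.range n, if i ≠ j ∧ ¬(j + 1 ≤ n - i) ∧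
        ¬((i + 1 = (n + 1) / 2 + 1 ∧ j + 1 = n) ∨ (i + 1 = n ∧ j + 1 = (n + 1) / 2 + 1))
      then 1 else 0) = yexp n i := by
  set K := (n+1)/2 with hK
  have hK4 : 2 ≤ K ∧ K < n - 1 := by constructor <;> omega
  rcases eq_or_ne i K with hiK | hiK
  · have h : ∀ j ∈ Finset.range n, (if i ≠ j ∧ ¬(j + 1 ≤ n - i) ∧
        ¬((i + 1 = (n + 1) / 2 + 1 ∧ j + 1 = n) ∨ (i + 1 = n ∧ j + 1 = (n + 1) / 2 + 1))
      then 1 else 0) = (if (n - i ≤ j ∧ j < n) ∧ j ≠ i ∧ j ≠ n - 1 then (1:ℕ) else 0) := by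
      intro j hj; rw [Finset.mem_range] at hj
      exact if_congr (by omega) rfl rfl
    rw [Finset.sum_congr rfl h, countI, yexp]
    split_ifs <;> omega
  · rcases eq_or_ne i (n-1) with hiN | hiN
    · have h : ∀ j ∈ Finset.range n, (if i ≠ j ∧ ¬(j + 1 ≤ n - i) ∧
          ¬((i + 1 = (n + 1) / 2 + 1 ∧ j + 1 = n) ∨ (i + 1 = n ∧ j + 1 = (n + 1) / 2 + 1))
        then 1 else 0) = (if (n - i ≤ j ∧ j < n) ∧ j ≠ i ∧ j ≠ K then (1:ℕ) else 0) := by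
        intro j hj; rw [Finset.mem_range] at hj
        exact if_congr (by omega) rfl rfl
      rw [Finset.sum_congr rfl h, countI, yexp]
      split_ifs <;> omega
    · have h : ∀ j ∈ Finset.range n, (if i ≠ j ∧ ¬(j + 1 ≤ n - i) ∧
          ¬((i + 1 = (n + 1) / 2 + 1 ∧ j + 1 = n) ∨ (i + 1 = n ∧ j + 1 = (n + 1) / 2 + 1))
        then 1 else 0) = (if (n - i ≤ j ∧ j < n) ∧ j ≠ i ∧ j ≠ i then (1:ℕ) else 0) := by
        intro j hj; rw [Finset.mem_range] at hj
        exact if_congr (by omega) rfl rfl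
      rw [Finset.sum_congr rfl h, countI, yexp]
      split_ifs <;> omega

lemma sumX (n i : ℕ) (hi : i < n) :
    (∑ j ∈ Finset.range n, if i ≠ j ∧ j + 1 ≤ n - i then 1 else 0) = xexp n i := by
  have h : ∀ j ∈ Finset.range n, (if i ≠ j ∧ j + 1 ≤ n - i then (1:ℕ) else 0)
      = (if (0 ≤ j ∧ j < n - i) ∧ j ≠ i ∧ j ≠ i then (1:ℕ) else 0) := by
    intro j hj; rw [Finset.mem_range] at hj
    exact if_congr (by omega) rfl rfl
  rw [Finset.sum_congr rfl h, countI, xexp]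
  split_ifs <;> omega

lemma sumZ (n i : ℕ) (hn : 4 ≤ n) (hi : i < n) :
    (∑ j ∈ Finset.range n, if i ≠ j ∧ ¬(j + 1 ≤ n - i) ∧
        ((i + 1 = (n + 1) / 2 + 1 ∧ j + 1 = n) ∨ (i + 1 = n ∧ j + 1 = (n + 1) / 2 + 1))
      then 1 else 0) = zexp n i := by
  set K := (n+1)/2 with hK
  have hK4 : 2 ≤ K ∧ K < n - 1 := by constructor <;> omega
  rcases eq_or_ne i K with hiK | hiK
  · have h : ∀ j ∈ Finset.range n, (if i ≠ j ∧ ¬(j + 1 ≤ n - i) ∧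
        ((i + 1 = (n + 1) / 2 + 1 ∧ j + 1 = n) ∨ (i + 1 = n ∧ j + 1 = (n + 1) / 2 + 1))
      then 1 else 0) = (if (n - 1 ≤ j ∧ j < n) ∧ j ≠ n ∧ j ≠ n then (1:ℕ) else 0) := by
      intro j hj; rw [Finset.mem_range] at hj
      exact if_congr (by omega) rfl rfl
    rw [Finset.sum_congr rfl h, countI, zexp]
    split_ifs <;> omega
  · rcases eq_or_ne i (n-1) with hiN | hiN
    · have h : ∀ j ∈ Finset.range n, (if i ≠ j ∧ ¬(j + 1 ≤ n - i) ∧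
          ((i + 1 = (n + 1) / 2 + 1 ∧ j + 1 = n) ∨ (i + 1 = n ∧ j + 1 = (n + 1) / 2 + 1))
        then 1 else 0) = (if (K ≤ j ∧ j < K + 1) ∧ j ≠ n ∧ j ≠ n then (1:ℕ) else 0) := by
        intro j hj; rw [Finset.mem_range] at hj
        exact if_congr (by omega) rfl rfl
      rw [Finset.sum_congr rfl h, countI, zexp]
      split_ifs <;> omega
    · have h : ∀ j ∈ Finset.range n, (if i ≠ j ∧ ¬(j + 1 ≤ n - i) ∧
          ((i + 1 = (n + 1) / 2 + 1 ∧ j + 1 = n) ∨ (i + 1 = n ∧ j + 1 = (n + 1) / 2 + 1))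
        then 1 else 0) = (if (0 ≤ j ∧ j < 0) ∧ j ≠ 0 ∧ j ≠ 0 then (1:ℕ) else 0) := by
        intro j hj; rw [Finset.mem_range] at hj
        exact if_congr (by omega) rfl rfl
      rw [Finset.sum_congr rfl h, countI, zexp]
      split_ifs <;> omega

lemma rowA (n : ℕ) (hn : 4 ≤ n) (i : Fin n) :
    rowProd (Mmat n 1 2 3) i = 2 ^ yexp n (i : ℕ) * 3 ^ zexp n (i : ℕ) := by
  rw [rowProd_Mmat n 1 2 3 one_ne_zero two_ne_zero three_ne_zero i]
  rw [Finset.prod_congr rfl fun j _ => entA n (i : ℕ) j, Finset.prod_mul_distrib,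
    Finset.prod_pow_eq_pow_sum, Finset.prod_pow_eq_pow_sum, sumY n i hn i.isLt,
    sumZ n i hn i.isLt]

lemma rowB (m : ℕ) (hm : 4 ≤ m) (i : Fin m) :
    rowProd (Mmat m 2 3 1) i = 2 ^ xexp m (i : ℕ) * 3 ^ yexp m (i : ℕ) := by
  rw [rowProd_Mmat m 2 3 1 two_ne_zero three_ne_zero one_ne_zero i]
  rw [Finset.prod_congr rfl fun j _ => entB m (i : ℕ) j, Finset.prod_mul_distrib,
    Finset.prod_pow_eq_pow_sum, Finset.prod_pow_eq_pow_sum, sumX m i i.isLt,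
    sumY m i hm i.isLt]

lemma pow23 {a b c d : ℕ} (h : 2^a*3^b = 2^c*3^d) : a = c ∧ b = d := by
  have h2 := congrArg (Nat.factorization · 2) h
  have h3 := congrArg (Nat.factorization · 3) h
  simp [Nat.factorization_mul, pow_ne_zero, Nat.factorization_pow,
    Nat.Prime.factorization, Nat.prime_two, Nat.prime_three, Finsupp.single_apply] at h2 h3
  exact ⟨h2, h3⟩

lemma rowProd_inl {n m : ℕ} (A : Matrix (Fin n) (Fin n) ℕ) (B : Matrix (Fin m) (Fin m) ℕ)
    (i : Fin n) : rowProd (Matrix.fromBlocks A 0 0 B) (Sum.inl i) = rowProd A i := by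
  rw [rowProd, rowProd, Finset.prod_filter, Finset.prod_filter, Fintype.prod_sum_type]
  simp [Matrix.fromBlocks]
  exact Finset.prod_congr rfl fun j _ => by split_ifs <;> simp_all

lemma rowProd_inr {n m : ℕ} (A : Matrix (Fin n) (Fin n) ℕ) (B : Matrix (Fin m) (Fin m) ℕ)
    (i : Fin m) : rowProd (Matrix.fromBlocks A 0 0 B) (Sum.inr i) = rowProd B i := by
  rw [rowProd, rowProd, Finset.prod_filter, Finset.prod_filter, Fintype.prod_sum_type]
  simp [Matrix.fromBlocks]
  exact Finset.prod_congr rfl fun j _ => by split_ifs <;> simp_all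

lemma injA {n i i' : ℕ} (hn : 4 ≤ n) (hi : i < n) (hi' : i' < n)
    (h1 : yexp n i = yexp n i') (h2 : zexp n i = zexp n i') : i = i' := by
  simp only [yexp, zexp] at h1 h2; split_ifs at h1 h2 <;> omega

lemma injB {m i i' : ℕ} (hm : 4 ≤ m) (hi : i < m) (hi' : i' < m)
    (h1 : xexp m i = xexp m i') (h2 : yexp m i = yexp m i') : i = i' := by
  simp only [xexp, yexp] at h1 h2; split_ifs at h1 h2 <;> omega

lemma injCross {n m i j : ℕ} (hn : 4 ≤ n) (hnm : n ≤ m)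
    (h44 : ¬(n = 4 ∧ m = 4)) (h55 : ¬(n = 5 ∧ m = 5)) (h66 : ¬(n = 6 ∧ m = 6))
    (hi : i < n) (hj : j < m)
    (h1 : yexp n i = xexp m j) (h2 : zexp n i = yexp m j) : False := by
  simp only [xexp, yexp, zexp] at h1 h2; split_ifs at h1 h2 <;> omega

end Aux

/-- For every `m ≥ n ≥ 4` with `(n,m) ∉ {(4,4),(5,5),(6,6)}`, the direct sum
`A_n ⊕ B_m` is product-irregular, where `A_n = M_n(1,2,3)` and `B_m = M_m(2,3,1)`. -/
theorem stmt_4 (n m : ℕ) (hn : 4 ≤ n) (hnm : n ≤ m)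
    (h44 : (n, m) ≠ (4, 4)) (h55 : (n, m) ≠ (5, 5)) (h66 : (n, m) ≠ (6, 6)) :
    MatPI (Matrix.fromBlocks (Mmat n 1 2 3) 0 0 (Mmat m 2 3 1)) := by
  have hm : 4 ≤ m := hn.trans hnm
  have h44' : ¬(n = 4 ∧ m = 4) := fun ⟨a, b⟩ => h44 (by simp [a, b])
  have h55' : ¬(n = 5 ∧ m = 5) := fun ⟨a, b⟩ => h55 (by simp [a, b])
  have h66' : ¬(n = 6 ∧ m = 6) := fun ⟨a, b⟩ => h66 (by simp [a, b])
  intro r s h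
  match r, s with
  | Sum.inl i, Sum.inl i' =>
    rw [rowProd_inl, rowProd_inl, rowA n hn, rowA n hn] at h
    obtain ⟨e1, e2⟩ := pow23 h
    exact congrArg Sum.inl (Fin.ext (injA hn i.isLt i'.isLt e1 e2))
  | Sum.inr j, Sum.inr j' =>
    rw [rowProd_inr, rowProd_inr, rowB m hm, rowB m hm] at h
    obtain ⟨e1, e2⟩ := pow23 h
    exact congrArg Sum.inr (Fin.ext (injB hm j.isLt j'.isLt e1 e2))
  | Sum.inl i, Sum.inr j =>
    rw [rowProd_inl, rowProd_inr, rowA n hn, rowB m hm] at h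
    obtain ⟨e1, e2⟩ := pow23 h
    exact absurd (injCross hn hnm h44' h55' h66' i.isLt j.isLt e1 e2) not_false
  | Sum.inr j, Sum.inl i =>
    rw [rowProd_inr, rowProd_inl, rowA n hn, rowB m hm] at h
    obtain ⟨e1, e2⟩ := pow23 h.symm
    exact absurd (injCross hn hnm h44' h55' h66' i.isLt j.isLt e1 e2) not_false
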